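/- Let g ∈ GL_n(k), X ∈ Mat_n(k), let F^j denote the span of the first j columns of g, and let E_{n-i} denote the span of the last n−i standard basis vectors. Then for i ≤ n and j ≤ n, the rank of the top-left i × (n+j) submatrix of the block matrix [[X, g], [w₀ g⁻¹, 0]] equals rank(X : k^n → k^n/(E_{n-i} + F^j)) + j − dim(F^j ∩ E_{n-i}). -/

import Mathlib

open Matrix

def w0 (k : Type*) [Field k] (n : ℕ) : Matrix (Fin n) (Fin n) k :=
  Matrix.of fun i j => if j = i.rev then 1 else 0

noncomputable def blockM {k : Type*} [Field k] {n : ℕ} (X g : Matrix (Fin n) (Fin n) k) :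
    Matrix (Fin (n + n)) (Fin (n + n)) k :=
  (Matrix.fromBlocks X g (w0 k n * g⁻¹) 0).submatrix
    finSumFinEquiv.symm finSumFinEquiv.symm

/-- `E_{n-i}` : the span of the last `n - i` standard basis vectors. -/
def Espan (k : Type*) [Field k] (n i : ℕ) : Submodule k (Fin n → k) :=
  Submodule.span k ((fun a : Fin n => (Pi.single a 1 : Fin n → k)) '' {a | i ≤ (a : ℕ)})

/-- `F^j` : the span of the first `j` columns of `g`. -/
def Fspan {k : Type*} [Field k] {n : ℕ} (g : Matrix (Fin n) (Fin n) k) (j : ℕ) :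
    Submodule k (Fin n → k) :=
  Submodule.span k ((fun c : Fin n => g.transpose c) '' {c | (c : ℕ) < j})

section Aux

variable {k : Type*} [Field k] {n : ℕ}

lemma finSumFinEquiv_symm_eq_inl {m l : ℕ} (c : Fin (m + l)) (h : (c : ℕ) < m) :
    finSumFinEquiv.symm c = Sum.inl ⟨(c : ℕ), h⟩ := by
  rw [Equiv.symm_apply_eq]
  apply Fin.ext
  simp

lemma finSumFinEquiv_symm_eq_inr {m l : ℕ} (c : Fin (m + l)) (h : m ≤ (c : ℕ)) :
    finSumFinEquiv.symm c = Sum.inr ⟨(c : ℕ) - m, by omega⟩ := by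
  rw [Equiv.symm_apply_eq]
  apply Fin.ext
  simp
  omega

/-- Kernel of the "restrict to first `i` coordinates" map is `Espan`. -/
lemma espan_eq_ker (i : ℕ) (hi : i ≤ n) :
    Espan k n i = LinearMap.ker (LinearMap.funLeft k k (Fin.castLE hi)) := by
  apply le_antisymm
  · rw [Espan, Submodule.span_le]
    rintro x ⟨a, ha, rfl⟩
    simp only [SetLike.mem_coe, LinearMap.mem_ker]
    funext c
    have hne : Fin.castLE hi c ≠ a := by
      intro hEq
      have : ((Fin.castLE hi c : Fin n) : ℕ) = (a : ℕ) := by rw [hEq]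
      simp at this
      have hc : (c : ℕ) < i := c.isLt
      have := ha
      simp only [Set.mem_setOf_eq] at this
      omega
    simp [LinearMap.funLeft_apply, Pi.single_eq_of_ne hne]
  · intro v hv
    simp only [LinearMap.mem_ker] at hv
    have hv' : ∀ b : Fin n, (b : ℕ) < i → v b = 0 := by
      intro b hb
      have := congrFun hv ⟨(b : ℕ), hb⟩
      simpa [LinearMap.funLeft_apply, Fin.castLE] using this
    have hsum : v = ∑ b : Fin n, Pi.single b (v b) := by
      rw [Finset.univ_sum_single]
    rw [hsum]
    apply Submodule.sum_mem
    intro b _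
    by_cases hb : (b : ℕ) < i
    · rw [hv' b hb, Pi.single_zero]
      exact Submodule.zero_mem _
    · have hsingle : Pi.single b (v b) = (v b) • (Pi.single b 1 : Fin n → k) := by
        funext c
        by_cases hcb : c = b <;> simp [hcb, Pi.single_apply]
      rw [hsingle]
      exact Submodule.smul_mem _ _ (Submodule.subset_span ⟨b, by simpa using Nat.le_of_not_lt hb, rfl⟩)

lemma map_ker_eq_bot {V W : Type*} [AddCommGroup V] [Module k V] [AddCommGroup W] [Module k W]
    (p : V →ₗ[k] W) : Submodule.map p (LinearMap.ker p) = ⊥ := by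
  rw [Submodule.eq_bot_iff]
  rintro y ⟨x, hx, rfl⟩
  exact LinearMap.mem_ker.mp hx

lemma finrank_map_add_ker {V W : Type*} [AddCommGroup V] [Module k V] [AddCommGroup W]
    [Module k W] [FiniteDimensional k V] (p : V →ₗ[k] W) (S : Submodule k V) :
    Module.finrank k (Submodule.map p S) + Module.finrank k (LinearMap.ker p) =
      Module.finrank k ↥(S ⊔ LinearMap.ker p) := by
  set T := S ⊔ LinearMap.ker p with hT
  have hker : LinearMap.ker p ≤ T := le_sup_right
  have hmap : Submodule.map p T = Submodule.map p S := by
    rw [hT, Submodule.map_sup, map_ker_eq_bot, sup_bot_eq]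
  have h := LinearMap.finrank_range_add_finrank_ker (p ∘ₗ T.subtype)
  rw [LinearMap.range_comp, Submodule.range_subtype, hmap] at h
  have hker' : LinearMap.ker (p ∘ₗ T.subtype) = Submodule.comap T.subtype (LinearMap.ker p) := by
    rw [LinearMap.ker_comp]
  rw [hker'] at h
  have he : Module.finrank k (Submodule.comap T.subtype (LinearMap.ker p)) =
      Module.finrank k (LinearMap.ker p) :=
    (Submodule.comapSubtypeEquivOfLe hker).finrank_eq
  rw [he] at h
  exact h

end Aux

/-- The rank of the top-left `i × (n+j)` submatrix of `[[X, g], [w₀ g⁻¹, 0]]` equals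
`rank(X : kⁿ → kⁿ/(E_{n-i} + F^j)) + j − dim (F^j ∩ E_{n-i})`. -/
theorem stmt_9 {k : Type*} [Field k] {n : ℕ}
    (g X : Matrix (Fin n) (Fin n) k) (hg : IsUnit g)
    (i j : ℕ) (hi : i ≤ n) (hj : j ≤ n) :
    ((blockM X g).submatrix (Fin.castLE (show i ≤ n + n by omega))
        (Fin.castLE (show n + j ≤ n + n by omega))).rank =
      Module.finrank k
        (LinearMap.range ((Espan k n i ⊔ Fspan g j).mkQ ∘ₗ X.mulVecLin)) + j
        - Module.finrank k ↥(Fspan g j ⊓ Espan k n i) := by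
  classical
  set E := Espan k n i with hE
  set F := Fspan g j with hF
  set S := LinearMap.range X.mulVecLin with hS
  -- the matrix with all n rows and the first n+j columns
  set B : Matrix (Fin n) (Fin (n + j)) k :=
    (blockM X g).submatrix (Fin.castLE (show n ≤ n + n by omega))
      (Fin.castLE (show n + j ≤ n + n by omega)) with hB
  set A : Matrix (Fin i) (Fin (n + j)) k :=
    (blockM X g).submatrix (Fin.castLE (show i ≤ n + n by omega))
      (Fin.castLE (show n + j ≤ n + n by omega)) with hA
  -- evaluation of B
  have hBval : ∀ (r : Fin n) (c : Fin (n + j)),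
      B r c = if h : (c : ℕ) < n then X r ⟨(c : ℕ), h⟩
        else g r ⟨(c : ℕ) - n, by omega⟩ := by
    intro r c
    rw [hB]
    simp only [Matrix.submatrix_apply, blockM]
    rw [finSumFinEquiv_symm_eq_inl (Fin.castLE _ r) (by simpa using r.isLt)]
    by_cases h : (c : ℕ) < n
    · rw [finSumFinEquiv_symm_eq_inl (Fin.castLE _ c) (by simpa using h)]
      simp [h]
    · rw [finSumFinEquiv_symm_eq_inr (Fin.castLE _ c) (by simpa using Nat.le_of_not_lt h)]
      simp [h]
  -- A is B with restricted rows
  have hAB : A = B.submatrix (Fin.castLE hi) id := by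
    rw [hA, hB]
    ext r c
    simp [Matrix.submatrix_apply]
  set p : (Fin n → k) →ₗ[k] (Fin i → k) := LinearMap.funLeft k k (Fin.castLE hi) with hp
  -- A.mulVecLin = p ∘ B.mulVecLin
  have hAmul : A.mulVecLin = p ∘ₗ B.mulVecLin := by
    rw [hAB]
    refine LinearMap.ext fun v => ?_
    funext r
    rw [hp]
    simp [Matrix.mulVecLin, Matrix.mulVec, dotProduct, LinearMap.funLeft_apply]
  -- range of B.mulVecLin = S ⊔ F
  have hBrange : LinearMap.range B.mulVecLin = S ⊔ F := by
    rw [Matrix.range_mulVecLin, hS, Matrix.range_mulVecLin, hF, Fspan,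
      ← Submodule.span_union]
    congr 1
    ext x
    constructor
    · rintro ⟨c, rfl⟩
      by_cases h : (c : ℕ) < n
      · left
        refine ⟨⟨(c : ℕ), h⟩, ?_⟩
        funext r
        simp only [Matrix.transpose_apply, Matrix.col_apply]
        rw [hBval r c]
        simp [h]
      · right
        refine ⟨⟨(c : ℕ) - n, by omega⟩, by simp; omega, ?_⟩
        funext r
        simp only [Matrix.transpose_apply, Matrix.col_apply]
        rw [hBval r c]
        simp [h]
    · rintro (⟨d, rfl⟩ | ⟨d, hd, rfl⟩)
      · refine ⟨⟨(d : ℕ), by omega⟩, ?_⟩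
        funext r
        simp only [Matrix.transpose_apply, Matrix.col_apply]
        rw [hBval]
        simp
      · simp only [Set.mem_setOf_eq] at hd
        refine ⟨⟨n + (d : ℕ), by omega⟩, ?_⟩
        funext r
        simp only [Matrix.transpose_apply, Matrix.col_apply]
        rw [hBval]
        have hnd : ¬ (n + (d : ℕ) < n) := by omega
        rw [dif_neg hnd]
        congr 1
        apply Fin.ext
        simp
    -- done with hBrange
  have hkerp : LinearMap.ker p = E := by
    rw [hp, hE, espan_eq_ker i hi]
  -- rank of A
  have hrankA : A.rank + Module.finrank k E = Module.finrank k ↥(S ⊔ F ⊔ E) := by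
    have : A.rank = Module.finrank k (Submodule.map p (S ⊔ F)) := by
      rw [Matrix.rank, hAmul, LinearMap.range_comp, hBrange]
    rw [this, ← hkerp]
    exact finrank_map_add_ker p (S ⊔ F)
  -- rank of the quotient map
  set W := E ⊔ F with hW
  have hrankQ : Module.finrank k (LinearMap.range (W.mkQ ∘ₗ X.mulVecLin))
      + Module.finrank k W = Module.finrank k ↥(S ⊔ F ⊔ E) := by
    have h1 : LinearMap.range (W.mkQ ∘ₗ X.mulVecLin) = Submodule.map W.mkQ S := by
      rw [LinearMap.range_comp, hS]
    have h2 := finrank_map_add_ker W.mkQ S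
    rw [Submodule.ker_mkQ] at h2
    have hsup : S ⊔ W = S ⊔ F ⊔ E := by
      rw [hW, sup_comm E F, ← sup_assoc]
    rw [hsup] at h2
    rw [h1]
    exact h2
  -- finrank F = j
  have hFj : Module.finrank k F = j := by
    have hli : LinearIndependent k (fun c : Fin n => g.transpose c) :=
      Matrix.linearIndependent_cols_iff_isUnit.mpr hg
    have hli2 : LinearIndependent k ((fun c : Fin n => g.transpose c) ∘ Fin.castLE hj) :=
      hli.comp _ (Fin.castLE_injective hj)
    have hset : ((fun c : Fin n => g.transpose c) '' {c | (c : ℕ) < j}) =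
        Set.range ((fun c : Fin n => g.transpose c) ∘ Fin.castLE hj) := by
      ext x
      constructor
      · rintro ⟨c, hc, rfl⟩
        exact ⟨⟨(c : ℕ), hc⟩, rfl⟩
      · rintro ⟨m, rfl⟩
        exact ⟨Fin.castLE hj m, m.isLt, rfl⟩
    rw [hF, Fspan, hset, finrank_span_eq_card hli2, Fintype.card_fin]
  -- finrank (F ⊓ E) ≤ j
  have hm : Module.finrank k ↥(F ⊓ E) ≤ j := by
    rw [← hFj]
    exact Submodule.finrank_mono inf_le_left
  have hsupinf : Module.finrank k ↥(F ⊔ E) + Module.finrank k ↥(F ⊓ E) =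
      Module.finrank k F + Module.finrank k E :=
    Submodule.finrank_sup_add_finrank_inf_eq F E
  have hWFE : Module.finrank k W = Module.finrank k ↥(F ⊔ E) := by
    rw [hW, sup_comm]
  -- put it all together
  omega
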